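/- Let (K,d,ν) be a compact metric measure space of diameter ≤ 1 satisfying the chain condition with constant C₁ and such that ν(B(z,r)) ≍ r^α for all z ∈ K, 0 < r ≤ 1. Then for every integer n ≥ 1 there exists C = C(n) > 0 such that for all u ∈ L²(K;ν): ∬_{K×K} (u(x)-u(y))² dν(x)dν(y) ≤ C ∬_{d(x,y) ≤ 2^{-n}} (u(x)-u(y))² dν(y)dν(x). -/

import Mathlib

open MeasureTheory
open scoped ENNReal


lemma jensen_step {X : Type*} [MeasurableSpace X] (ν : Measure X) [IsFiniteMeasure ν]
    {u : X → ℝ} (hu1 : Integrable u ν) (hu2 : Integrable (fun w => u w ^ 2) ν)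
    (B : Set X) (hB0 : ν B ≠ 0)
    {m : ℝ} (hm : 0 < m) (hmB : ENNReal.ofReal m ≤ ν B)
    (c : ℝ) {T : ℝ≥0∞} (hT : T ≠ ⊤)
    (hsub : ∫⁻ w in B, ENNReal.ofReal ((c - u w) ^ 2) ∂ν ≤ T) :
    (c - ⨍ w in B, u w ∂ν) ^ 2 ≤ T.toReal / m := by
  set μ := ν.restrict B with hμ
  haveI : NeZero μ := ⟨fun h => hB0 (by
    have := congrArg (fun m : Measure X => m Set.univ) h
    simpa [μ, Measure.restrict_apply_univ] using this)⟩
  have htop : μ Set.univ ≠ ⊤ := measure_ne_top _ _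
  have huniv : μ Set.univ = ν B := Measure.restrict_apply_univ _
  have hmle : m ≤ (μ Set.univ).toReal := by
    have := ENNReal.toReal_mono htop (huniv ▸ hmB)
    rwa [ENNReal.toReal_ofReal hm.le] at this
  have ht0 : (0:ℝ) < (μ Set.univ).toReal := lt_of_lt_of_le hm hmle
  have hu1' : Integrable u μ := hu1.restrict
  have hInt : Integrable (fun w => c - u w) μ := (integrable_const c).sub hu1'
  have hInt2 : Integrable (fun w => (c - u w) ^ 2) μ := by
    have heq : (fun w => (c - u w) ^ 2) = fun w => c ^ 2 - 2 * c * u w + u w ^ 2 := by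
      funext w; ring
    rw [heq]
    exact ((integrable_const _).sub (hu1'.const_mul _)).add hu2.restrict
  have havg : ⨍ w, (c - u w) ∂μ = c - ⨍ w, u w ∂μ := by
    rw [average_eq, average_eq, integral_sub (integrable_const c) hu1', integral_const,
      smul_eq_mul, smul_eq_mul, smul_eq_mul]
    have hne : μ.real Set.univ ≠ 0 := ht0.ne'
    field_simp
  have hJ : (⨍ w, (c - u w) ∂μ) ^ 2 ≤ ⨍ w, (c - u w) ^ 2 ∂μ := by
    have := (Even.convexOn_pow (even_two)).map_average_le
      (continuous_pow 2).continuousOn isClosed_univ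
      (Filter.Eventually.of_forall fun _ => Set.mem_univ _) hInt ?_
    · exact this
    · exact hInt2
  have h2 : ⨍ w, (c - u w) ^ 2 ∂μ ≤ T.toReal / m := by
    rw [average_eq, smul_eq_mul]
    have hI : ∫ w, (c - u w) ^ 2 ∂μ
        = (∫⁻ w, ENNReal.ofReal ((c - u w) ^ 2) ∂μ).toReal :=
      integral_eq_lintegral_of_nonneg_ae (Filter.Eventually.of_forall fun w => sq_nonneg _)
        hInt2.aestronglyMeasurable
    have hle : (∫⁻ w, ENNReal.ofReal ((c - u w) ^ 2) ∂μ).toReal ≤ T.toReal :=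
      ENNReal.toReal_mono hT hsub
    have hnn : 0 ≤ (∫⁻ w, ENNReal.ofReal ((c - u w) ^ 2) ∂μ).toReal := ENNReal.toReal_nonneg
    calc (μ Set.univ).toReal⁻¹ * ∫ w, (c - u w) ^ 2 ∂μ
        ≤ m⁻¹ * T.toReal := by
          rw [hI]
          exact mul_le_mul (inv_anti₀ hm hmle) hle hnn (inv_nonneg.mpr hm.le)
      _ = T.toReal / m := by rw [inv_mul_eq_div]
  calc (c - ⨍ w in B, u w ∂ν) ^ 2 = (⨍ w, (c - u w) ∂μ) ^ 2 := by rw [havg]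
    _ ≤ ⨍ w, (c - u w) ^ 2 ∂μ := hJ
    _ ≤ T.toReal / m := h2

lemma lint_sq_ne_top {X : Type*} [MeasurableSpace X] (ν : Measure X) [IsFiniteMeasure ν]
    {u : X → ℝ} (hu2 : Integrable (fun w => u w ^ 2) ν) (x : X) (s : Set X) :
    ∫⁻ y in s, ENNReal.ofReal ((u x - u y) ^ 2) ∂ν ≠ ⊤ := by
  have h1 : ∀ y : X, ENNReal.ofReal ((u x - u y) ^ 2)
      ≤ ENNReal.ofReal (2 * u x ^ 2) + ENNReal.ofReal (2 * u y ^ 2) := fun y =>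
    le_trans (ENNReal.ofReal_le_ofReal (by nlinarith [sq_nonneg (u x + u y)]))
      ENNReal.ofReal_add_le
  have h2 : ∫⁻ y in s, ENNReal.ofReal ((u x - u y) ^ 2) ∂ν
      ≤ ∫⁻ y, (ENNReal.ofReal (2 * u x ^ 2) + ENNReal.ofReal (2 * u y ^ 2)) ∂ν :=
    le_trans (setLIntegral_le_lintegral _ _) (lintegral_mono h1)
  rw [lintegral_add_left measurable_const, lintegral_const] at h2
  have h3 : ∫⁻ y, ENNReal.ofReal (2 * u y ^ 2) ∂ν < ⊤ :=
    (hu2.const_mul 2).lintegral_lt_top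
  exact ne_top_of_le_ne_top (ENNReal.add_ne_top.mpr
    ⟨ENNReal.mul_ne_top ENNReal.ofReal_ne_top (measure_ne_top _ _), h3.ne⟩) h2

set_option maxHeartbeats 1000000 in
/-- On a compact Ahlfors-regular metric measure space of diameter `≤ 1` satisfying the
chain condition, the full double integral of squared increments is controlled by the
near-diagonal double integral. -/
theorem stmt_16 {X : Type*} [MetricSpace X] [CompactSpace X] [MeasurableSpace X]
    [BorelSpace X] (ν : Measure X) [IsFiniteMeasure ν] (α : ℝ) (hα : 0 < α)
    (hdiam : Metric.diam (Set.univ : Set X) ≤ 1)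
    (C₁ : ℝ) (hC₁ : 0 < C₁)
    (hchain : ∀ x y : X, ∀ N : ℕ, 0 < N →
      ∃ z : ℕ → X, z 0 = x ∧ z N = y ∧
        ∀ i < N, dist (z i) (z (i + 1)) ≤ C₁ * dist x y / N)
    (c₁ c₂ : ℝ) (hc₁ : 0 < c₁) (hc₂ : 0 < c₂)
    (hAhlfors : ∀ (z : X) (r : ℝ), 0 < r → r ≤ 1 →
      ENNReal.ofReal (c₁ * r ^ α) ≤ ν (Metric.ball z r) ∧
        ν (Metric.ball z r) ≤ ENNReal.ofReal (c₂ * r ^ α)) :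
    ∀ n : ℕ, 1 ≤ n → ∃ C : ℝ, 0 < C ∧
      ∀ u : X → ℝ, MemLp u 2 ν →
        ∫⁻ x, ∫⁻ y, ENNReal.ofReal ((u x - u y) ^ 2) ∂ν ∂ν ≤
          ENNReal.ofReal C *
            ∫⁻ x, ∫⁻ y in {y | dist x y ≤ (2 : ℝ) ^ (-(n : ℝ))},
              ENNReal.ofReal ((u x - u y) ^ 2) ∂ν ∂ν := by
  intro n hn
  set ε : ℝ := (2 : ℝ) ^ (-(n : ℝ)) with hεdef
  have hε0 : 0 < ε := Real.rpow_pos_of_pos two_pos _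
  have hε1 : ε ≤ 1 := Real.rpow_le_one_of_one_le_of_nonpos one_le_two (by
    simp [Nat.cast_nonneg])
  set r : ℝ := ε / 4 with hrdef
  have hr0 : 0 < r := by positivity
  have hr1 : r ≤ 1 := by rw [hrdef]; linarith
  set m : ℝ := c₁ * r ^ α with hmdef
  have hm : 0 < m := by
    have : (0:ℝ) < r ^ α := Real.rpow_pos_of_pos hr0 α
    positivity
  have hball : ∀ z : X, ENNReal.ofReal m ≤ ν (Metric.ball z r) := fun z =>
    (hAhlfors z r hr0 hr1).1
  set N : ℕ := ⌈2 * C₁ / ε⌉₊ + 1 with hNdef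
  have hN0 : 0 < N := Nat.succ_pos _
  have hN0' : (0:ℝ) < N := by exact_mod_cast hN0
  have hCN : C₁ / N ≤ ε / 2 := by
    have h1 : 2 * C₁ / ε ≤ (N : ℝ) := by
      refine (Nat.le_ceil _).trans ?_
      exact_mod_cast Nat.le_succ _
    rw [div_le_div_iff₀ hN0' two_pos]
    rw [div_le_iff₀ hε0] at h1
    nlinarith
  have hdist1 : ∀ x y : X, dist x y ≤ 1 := fun x y =>
    (Metric.dist_le_diam_of_mem (isCompact_univ.isBounded) trivial trivial).trans hdiam
  set V : ℝ := (ν Set.univ).toReal with hVdef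
  have hV0 : 0 ≤ V := ENNReal.toReal_nonneg
  set Creal : ℝ := ((N : ℝ) + 2) ^ 2 * (2 * V / m + V ^ 2 / m ^ 2) + 1 with hCdef
  have hC : 0 < Creal := by positivity
  refine ⟨Creal, hC, ?_⟩
  intro u₀ hu₀
  -- replace u₀ by a measurable representative
  obtain ⟨v, hvm, huv⟩ := hu₀.aestronglyMeasurable
  have hvL : MemLp v 2 ν := hu₀.ae_eq huv
  have hLHS : ∫⁻ x, ∫⁻ y, ENNReal.ofReal ((u₀ x - u₀ y) ^ 2) ∂ν ∂ν
      = ∫⁻ x, ∫⁻ y, ENNReal.ofReal ((v x - v y) ^ 2) ∂ν ∂ν := by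
    apply lintegral_congr_ae
    filter_upwards [huv] with x hx
    apply lintegral_congr_ae
    filter_upwards [huv] with y hy
    rw [hx, hy]
  have hRHS : ∫⁻ x, ∫⁻ y in {y | dist x y ≤ ε}, ENNReal.ofReal ((u₀ x - u₀ y) ^ 2) ∂ν ∂ν
      = ∫⁻ x, ∫⁻ y in {y | dist x y ≤ ε}, ENNReal.ofReal ((v x - v y) ^ 2) ∂ν ∂ν := by
    apply lintegral_congr_ae
    filter_upwards [huv] with x hx
    apply lintegral_congr_ae
    filter_upwards [ae_restrict_of_ae huv] with y hy
    rw [hx, hy]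
  rw [hLHS, hRHS]
  have hum : Measurable v := hvm.measurable
  have hu1 : Integrable v ν := hvL.integrable one_le_two
  have hu2 : Integrable (fun w => v w ^ 2) ν := hvL.integrable_sq
  set E : ℝ≥0∞ :=
    ∫⁻ x, ∫⁻ y in {y | dist x y ≤ ε}, ENNReal.ofReal ((v x - v y) ^ 2) ∂ν ∂ν with hEdef
  by_cases hEtop : E = ⊤
  · rw [hEtop, ENNReal.mul_top (by simpa using (ENNReal.ofReal_pos.mpr hC).ne')]
    exact le_top
  set F : X → ℝ≥0∞ :=
    fun x => ∫⁻ y in {y | dist x y ≤ ε}, ENNReal.ofReal ((v x - v y) ^ 2) ∂ν with hFdef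
  have hEF : E = ∫⁻ x, F x ∂ν := rfl
  have hFtop : ∀ x, F x ≠ ⊤ := fun x => lint_sq_ne_top ν hu2 x _
  -- measurability of F
  have hFmeas : Measurable F := by
    have hD : MeasurableSet {q : X × X | dist q.1 q.2 ≤ ε} :=
      (isClosed_le continuous_dist continuous_const).measurableSet
    have hf : Measurable fun q : X × X => ENNReal.ofReal ((v q.1 - v q.2) ^ 2) :=
      ENNReal.measurable_ofReal.comp
        (((hum.comp measurable_fst).sub (hum.comp measurable_snd)).pow_const 2)
    have hGm : Measurable
        ({q : X × X | dist q.1 q.2 ≤ ε}.indicator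
          fun q : X × X => ENNReal.ofReal ((v q.1 - v q.2) ^ 2)) := hf.indicator hD
    have hFeq : F = fun x => ∫⁻ y,
        ({q : X × X | dist q.1 q.2 ≤ ε}.indicator
          fun q : X × X => ENNReal.ofReal ((v q.1 - v q.2) ^ 2)) (x, y) ∂ν := by
      funext x
      have hsx : MeasurableSet {y : X | dist x y ≤ ε} :=
        (isClosed_le (continuous_const.dist continuous_id) continuous_const).measurableSet
      simp only [hFdef]
      rw [← lintegral_indicator hsx]
      refine lintegral_congr fun y => ?_
      by_cases h : dist x y ≤ ε <;>
        simp [Set.indicator_apply, h, Set.mem_setOf_eq]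
    rw [hFeq]
    exact Measurable.lintegral_prod_right hGm
  -- pointwise key inequality
  have key : ∀ x y : X, (v x - v y) ^ 2
      ≤ ((N : ℝ) + 2) ^ 2 * ((F x).toReal / m + (F y).toReal / m + E.toReal / m ^ 2) := by
    intro x y
    obtain ⟨z, hz0, hzN, hzs⟩ := hchain x y N hN0
    have hstep : ∀ i < N, dist (z i) (z (i + 1)) ≤ ε / 2 := by
      intro i hi
      refine (hzs i hi).trans ?_
      have h1 : C₁ * dist x y ≤ C₁ * 1 := by
        have := hdist1 x y
        nlinarith
      calc C₁ * dist x y / N ≤ C₁ * 1 / N := by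
            gcongr
          _ = C₁ / N := by rw [mul_one]
          _ ≤ ε / 2 := hCN
    set B : ℕ → Set X := fun i => Metric.ball (z i) r with hBdef
    have hBpos : ∀ i, ν (B i) ≠ 0 := fun i =>
      (lt_of_lt_of_le (ENNReal.ofReal_pos.mpr hm) (hball (z i))).ne'
    set g : ℕ → ℝ := fun i => ⨍ w in B i, v w ∂ν with hgdef
    -- inner bound for middle chains
    have hFnn : ∀ w : X, (0:ℝ) ≤ (F w).toReal := fun w => ENNReal.toReal_nonneg
    have hEnn : (0:ℝ) ≤ E.toReal := ENNReal.toReal_nonneg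
    have hmid : ∀ i, i < N → (g i - g (i + 1)) ^ 2 ≤ E.toReal / m ^ 2 := by
      intro i hi
      have hinner : ∀ w ∈ B i, (v w - g (i + 1)) ^ 2 ≤ (F w).toReal / m := by
        intro w hw
        have hsubset : B (i + 1) ⊆ {y : X | dist w y ≤ ε} := by
          intro w' hw'
          have h1 : dist w (z i) < r := Metric.mem_ball.mp hw
          have h2 : dist w' (z (i + 1)) < r := Metric.mem_ball.mp hw'
          have h3 : dist (z i) (z (i + 1)) ≤ ε / 2 := hstep i hi
          have h4 : dist w w' ≤ dist w (z i) + dist (z i) (z (i + 1)) + dist (z (i + 1)) w' :=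
            dist_triangle4 w (z i) (z (i + 1)) w'
          have h5 : dist (z (i + 1)) w' = dist w' (z (i + 1)) := dist_comm _ _
          have : dist w w' ≤ ε := by
            rw [hrdef] at h1 h2
            rw [h5] at h4
            linarith
          exact this
        exact jensen_step ν hu1 hu2 (B (i + 1)) (hBpos (i + 1)) hm (hball _) (v w)
          (hFtop w) (lintegral_mono_set hsubset)
      set T : ℝ≥0∞ := ∫⁻ w in B i, ENNReal.ofReal ((g (i + 1) - v w) ^ 2) ∂ν with hTdef
      have hTle : T ≤ ENNReal.ofReal m⁻¹ * E := by
        calc T ≤ ∫⁻ w in B i, ENNReal.ofReal m⁻¹ * F w ∂ν := by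
              apply setLIntegral_mono (hFmeas.const_mul _)
              intro w hw
              have h1 : (g (i + 1) - v w) ^ 2 = (v w - g (i + 1)) ^ 2 := by ring
              rw [h1]
              calc ENNReal.ofReal ((v w - g (i + 1)) ^ 2)
                  ≤ ENNReal.ofReal ((F w).toReal / m) :=
                    ENNReal.ofReal_le_ofReal (hinner w hw)
                _ = ENNReal.ofReal m⁻¹ * F w := by
                    rw [div_eq_inv_mul, ENNReal.ofReal_mul (inv_nonneg.mpr hm.le),
                      ENNReal.ofReal_toReal (hFtop w)]
          _ ≤ ∫⁻ w, ENNReal.ofReal m⁻¹ * F w ∂ν := setLIntegral_le_lintegral _ _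
          _ = ENNReal.ofReal m⁻¹ * E := by
              rw [lintegral_const_mul' _ _ ENNReal.ofReal_ne_top, hEF]
      have hTtop : T ≠ ⊤ :=
        ne_top_of_le_ne_top (ENNReal.mul_ne_top ENNReal.ofReal_ne_top hEtop) hTle
      have hj : (g (i + 1) - g i) ^ 2 ≤ T.toReal / m :=
        jensen_step ν hu1 hu2 (B i) (hBpos i) hm (hball _) (g (i + 1)) hTtop le_rfl
      have hTtoR : T.toReal ≤ m⁻¹ * E.toReal := by
        have := ENNReal.toReal_mono (ENNReal.mul_ne_top ENNReal.ofReal_ne_top hEtop) hTle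
        rwa [ENNReal.toReal_mul, ENNReal.toReal_ofReal (inv_nonneg.mpr hm.le)] at this
      have h2 : (g i - g (i + 1)) ^ 2 = (g (i + 1) - g i) ^ 2 := by ring
      rw [h2]
      calc (g (i + 1) - g i) ^ 2 ≤ T.toReal / m := hj
        _ ≤ (m⁻¹ * E.toReal) / m := by
            rw [div_eq_mul_inv, div_eq_mul_inv]
            exact mul_le_mul_of_nonneg_right hTtoR (inv_nonneg.mpr hm.le)
        _ = E.toReal / m ^ 2 := by
            rw [div_eq_mul_inv, div_eq_mul_inv, sq, mul_inv]
            ring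
    -- endpoints
    have hend0 : (v x - g 0) ^ 2 ≤ (F x).toReal / m := by
      have hsubset : B 0 ⊆ {y : X | dist x y ≤ ε} := by
        intro w hw
        have h1 : dist w (z 0) < r := Metric.mem_ball.mp hw
        rw [hz0] at h1
        have : dist x w ≤ ε := by
          rw [dist_comm]
          rw [hrdef] at h1
          linarith
        exact this
      exact jensen_step ν hu1 hu2 (B 0) (hBpos 0) hm (hball _) (v x) (hFtop x)
        (lintegral_mono_set hsubset)
    have hendN : (g N - v y) ^ 2 ≤ (F y).toReal / m := by
      have hsubset : B N ⊆ {y' : X | dist y y' ≤ ε} := by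
        intro w hw
        have h1 : dist w (z N) < r := Metric.mem_ball.mp hw
        rw [hzN] at h1
        have : dist y w ≤ ε := by
          rw [dist_comm]
          rw [hrdef] at h1
          linarith
        exact this
      have := jensen_step ν hu1 hu2 (B N) (hBpos N) hm (hball _) (v y) (hFtop y)
        (lintegral_mono_set hsubset)
      have h2 : (g N - v y) ^ 2 = (v y - g N) ^ 2 := by ring
      rw [h2]
      exact this
    -- assemble
    set a : ℕ → ℝ := fun i =>
      if i = 0 then v x - g 0 else if i = N + 1 then g N - v y else g (i - 1) - g i with hadef
    have hsum : v x - v y = ∑ i ∈ Finset.range (N + 2), a i := by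
      rw [Finset.sum_range_succ, Finset.sum_range_succ']
      have h1 : ∀ i ∈ Finset.range N, a (i + 1) = g i - g (i + 1) := by
        intro i hi
        have hiN : i < N := Finset.mem_range.mp hi
        have h2 : i + 1 ≠ 0 := Nat.succ_ne_zero i
        have h3 : i + 1 ≠ N + 1 := by omega
        simp only [hadef, h2, h3, if_false, if_neg h2, if_neg h3, Nat.add_sub_cancel]
      rw [Finset.sum_congr rfl h1, Finset.sum_range_sub' g N]
      have h4 : a 0 = v x - g 0 := by simp [hadef]
      have h5 : a (N + 1) = g N - v y := by
        have h6 : N + 1 ≠ 0 := Nat.succ_ne_zero N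
        simp [hadef, h6]
      rw [h4, h5]
      ring
    set β : ℝ := (F x).toReal / m + (F y).toReal / m + E.toReal / m ^ 2 with hβdef
    have hterm : ∀ i ∈ Finset.range (N + 2), a i ^ 2 ≤ β := by
      intro i hi
      have hiN : i < N + 2 := Finset.mem_range.mp hi
      have hb1 : (0:ℝ) ≤ (F x).toReal / m := by positivity
      have hb2 : (0:ℝ) ≤ (F y).toReal / m := by positivity
      have hb3 : (0:ℝ) ≤ E.toReal / m ^ 2 := by positivity
      rcases Nat.eq_zero_or_pos i with h0 | h0
      · subst h0
        have : a 0 = v x - g 0 := by simp [hadef]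
        rw [this, hβdef]
        linarith [hend0]
      · by_cases hN1 : i = N + 1
        · subst hN1
          have : a (N + 1) = g N - v y := by simp [hadef, Nat.succ_ne_zero N]
          rw [this, hβdef]
          linarith [hendN]
        · obtain ⟨j, rfl⟩ : ∃ j, i = j + 1 := ⟨i - 1, by omega⟩
          have hjN : j < N := by omega
          have : a (j + 1) = g j - g (j + 1) := by
            have h2 : j + 1 ≠ 0 := Nat.succ_ne_zero j
            simp only [hadef, if_neg h2, if_neg hN1, Nat.add_sub_cancel]
          rw [this, hβdef]
          linarith [hmid j hjN]
    have hCS : (v x - v y) ^ 2 ≤ ((N : ℝ) + 2) * ∑ i ∈ Finset.range (N + 2), a i ^ 2 := by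
      rw [hsum]
      have h := sq_sum_le_card_mul_sum_sq (s := Finset.range (N + 2)) (f := a)
      rw [Finset.card_range] at h
      have hcast : ((N + 2 : ℕ) : ℝ) = (N : ℝ) + 2 := by norm_cast
      rw [hcast] at h
      exact h
    have hsumle : ∑ i ∈ Finset.range (N + 2), a i ^ 2 ≤ ((N : ℝ) + 2) * β := by
      calc ∑ i ∈ Finset.range (N + 2), a i ^ 2 ≤ ∑ _i ∈ Finset.range (N + 2), β :=
            Finset.sum_le_sum hterm
        _ = ((N : ℝ) + 2) * β := by
            rw [Finset.sum_const, Finset.card_range]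
            push_cast
            ring
    calc (v x - v y) ^ 2 ≤ ((N : ℝ) + 2) * ∑ i ∈ Finset.range (N + 2), a i ^ 2 := hCS
      _ ≤ ((N : ℝ) + 2) * (((N : ℝ) + 2) * β) := by
          have h2 : (0:ℝ) ≤ (N : ℝ) + 2 := by positivity
          nlinarith [hsumle]
      _ = ((N : ℝ) + 2) ^ 2 * β := by ring
  -- integrate the pointwise bound
  set κ : ℝ≥0∞ := ENNReal.ofReal (((N : ℝ) + 2) ^ 2) with hκdef
  set κ₁ : ℝ≥0∞ := κ * ENNReal.ofReal m⁻¹ with hκ₁def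
  set κ₂ : ℝ≥0∞ := κ * (ENNReal.ofReal (m ^ 2)⁻¹ * E) with hκ₂def
  have hκ₁top : κ₁ ≠ ⊤ := ENNReal.mul_ne_top ENNReal.ofReal_ne_top ENNReal.ofReal_ne_top
  have hκ₂top : κ₂ ≠ ⊤ := ENNReal.mul_ne_top ENNReal.ofReal_ne_top
    (ENNReal.mul_ne_top ENNReal.ofReal_ne_top hEtop)
  have keyE : ∀ x y : X, ENNReal.ofReal ((v x - v y) ^ 2)
      ≤ κ₁ * F x + κ₁ * F y + κ₂ := by
    intro x y
    have h1 := ENNReal.ofReal_le_ofReal (key x y)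
    refine h1.trans ?_
    have hnn1 : (0:ℝ) ≤ (F x).toReal / m + (F y).toReal / m := by positivity
    have hnn2 : (0:ℝ) ≤ (F x).toReal / m := by positivity
    have hofdiv : ∀ w : X, ENNReal.ofReal ((F w).toReal / m)
        = ENNReal.ofReal m⁻¹ * F w := by
      intro w
      rw [div_eq_inv_mul, ENNReal.ofReal_mul (inv_nonneg.mpr hm.le),
        ENNReal.ofReal_toReal (hFtop w)]
    rw [ENNReal.ofReal_mul (by positivity), ENNReal.ofReal_add hnn1 (by positivity),
      ENNReal.ofReal_add hnn2 (by positivity), hofdiv x, hofdiv y]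
    have hE2 : ENNReal.ofReal (E.toReal / m ^ 2) = ENNReal.ofReal ((m ^ 2)⁻¹) * E := by
      rw [div_eq_inv_mul, ENNReal.ofReal_mul (by positivity), ENNReal.ofReal_toReal hEtop]
    rw [hE2]
    refine le_of_eq ?_
    rw [hκ₁def, hκ₂def]
    ring
  have inner : ∀ x : X, ∫⁻ y, (κ₁ * F x + κ₁ * F y + κ₂) ∂ν
      = (κ₁ * ν Set.univ) * F x + (κ₁ * E + κ₂ * ν Set.univ) := by
    intro x
    have h1 : (fun y => κ₁ * F x + κ₁ * F y + κ₂) = fun y => κ₁ * F y + (κ₁ * F x + κ₂) := by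
      funext y; ring
    rw [h1, lintegral_add_right _ measurable_const, lintegral_const_mul' _ _ hκ₁top,
      lintegral_const, ← hEF]
    ring
  calc ∫⁻ x, ∫⁻ y, ENNReal.ofReal ((v x - v y) ^ 2) ∂ν ∂ν
      ≤ ∫⁻ x, ∫⁻ y, (κ₁ * F x + κ₁ * F y + κ₂) ∂ν ∂ν :=
        lintegral_mono fun x => lintegral_mono fun y => keyE x y
    _ = ∫⁻ x, ((κ₁ * ν Set.univ) * F x + (κ₁ * E + κ₂ * ν Set.univ)) ∂ν :=
        lintegral_congr fun x => inner x
    _ = (κ₁ * ν Set.univ) * E + (κ₁ * E + κ₂ * ν Set.univ) * ν Set.univ := by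
        rw [lintegral_add_right _ measurable_const,
          lintegral_const_mul' _ _ (ENNReal.mul_ne_top hκ₁top (measure_ne_top ν _)),
          lintegral_const, ← hEF]
    _ = (2 * κ₁ * ν Set.univ + κ * ENNReal.ofReal ((m ^ 2)⁻¹) * ν Set.univ * ν Set.univ) * E := by
        rw [hκ₂def]; ring
    _ ≤ ENNReal.ofReal Creal * E := by
        refine mul_le_mul_left ?_ E
        set D : ℝ≥0∞ :=
          2 * κ₁ * ν Set.univ + κ * ENNReal.ofReal ((m ^ 2)⁻¹) * ν Set.univ * ν Set.univ
          with hDdef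
        have hDne : D ≠ ⊤ := by
          rw [hDdef]
          exact ENNReal.add_ne_top.mpr
            ⟨ENNReal.mul_ne_top (ENNReal.mul_ne_top (by norm_num) hκ₁top) (measure_ne_top ν _),
             ENNReal.mul_ne_top (ENNReal.mul_ne_top
               (ENNReal.mul_ne_top ENNReal.ofReal_ne_top ENNReal.ofReal_ne_top)
               (measure_ne_top ν _)) (measure_ne_top ν _)⟩
        rw [ENNReal.le_ofReal_iff_toReal_le hDne hC.le]
        have hDto : D.toReal
            = 2 * (((N : ℝ) + 2) ^ 2 * m⁻¹) * V + ((N : ℝ) + 2) ^ 2 * (m ^ 2)⁻¹ * V * V := by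
          rw [hDdef, ENNReal.toReal_add (by finiteness) (by finiteness)]
          simp only [ENNReal.toReal_mul, hκ₁def, hκdef, ENNReal.toReal_mul, ENNReal.toReal_ofNat,
            ← hVdef]
          rw [ENNReal.toReal_ofReal (by positivity), ENNReal.toReal_ofReal (by positivity),
            ENNReal.toReal_ofReal (by positivity)]
        rw [hDto, hCdef]
        have hexp : 2 * (((N : ℝ) + 2) ^ 2 * m⁻¹) * V + ((N : ℝ) + 2) ^ 2 * (m ^ 2)⁻¹ * V * V
            = ((N : ℝ) + 2) ^ 2 * (2 * V / m + V ^ 2 / m ^ 2) := by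
          field_simp
        rw [hexp]
        linarith
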